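/- arXiv:1805.09112 — 5 statements merged into one kernel-verified Lean document; each statement's English description precedes it below -/
import Mathlib

section
/- For fixed r ∈ ℝ and x ∈ ℝ^n \ {0}, the Möbius scalar multiple r ⊗_c x converges to the Euclidean scalar multiple r·x as c → 0⁺. -/
noncomputable section
open Real
open scoped RealInnerProductSpace
attribute [local instance] Classical.propDecidable

/-- Inverse hyperbolic tangent. -/
def artanh (x : ℝ) : ℝ := (1 / 2) * Real.log ((1 + x) / (1 - x))

/-- Inverse hyperbolic cosine. -/
def arcosh (x : ℝ) : ℝ := Real.log (x + Real.sqrt (x ^ 2 - 1))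

/-- Möbius addition on the ball `D_c^n`. -/
def mAdd {n : ℕ} (c : ℝ) (x y : EuclideanSpace ℝ (Fin n)) : EuclideanSpace ℝ (Fin n) :=
  (1 / (1 + 2 * c * ⟪x, y⟫ + c ^ 2 * ‖x‖ ^ 2 * ‖y‖ ^ 2)) •
    ((1 + 2 * c * ⟪x, y⟫ + c * ‖y‖ ^ 2) • x + (1 - c * ‖x‖ ^ 2) • y)

/-- Möbius scalar multiplication. -/
def mSmul {n : ℕ} (c r : ℝ) (x : EuclideanSpace ℝ (Fin n)) : EuclideanSpace ℝ (Fin n) :=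
  if x = 0 then 0 else
    ((1 / Real.sqrt c) * Real.tanh (r * _root_.artanh (Real.sqrt c * ‖x‖)) * ‖x‖⁻¹) • x

/-- Induced gyrovector distance. -/
def mDist {n : ℕ} (c : ℝ) (x y : EuclideanSpace ℝ (Fin n)) : ℝ :=
  (2 / Real.sqrt c) * _root_.artanh (Real.sqrt c * ‖mAdd c (-x) y‖)

/-- Conformal factor. -/
def lam {n : ℕ} (c : ℝ) (x : EuclideanSpace ℝ (Fin n)) : ℝ := 2 / (1 - c * ‖x‖ ^ 2)

/-- Exponential map at `x`. -/
def expMap {n : ℕ} (c : ℝ) (x v : EuclideanSpace ℝ (Fin n)) : EuclideanSpace ℝ (Fin n) :=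
  if v = 0 then x else
    mAdd c x ((Real.tanh (Real.sqrt c * lam c x * ‖v‖ / 2) / (Real.sqrt c * ‖v‖)) • v)

/-- Logarithmic map at `x`. -/
def logMap {n : ℕ} (c : ℝ) (x y : EuclideanSpace ℝ (Fin n)) : EuclideanSpace ℝ (Fin n) :=
  if mAdd c (-x) y = 0 then 0 else
    ((2 / (Real.sqrt c * lam c x)) * _root_.artanh (Real.sqrt c * ‖mAdd c (-x) y‖) *
      ‖mAdd c (-x) y‖⁻¹) • mAdd c (-x) y

/-- Exponential map at the origin. -/
def expZero {n : ℕ} (c : ℝ) (v : EuclideanSpace ℝ (Fin n)) : EuclideanSpace ℝ (Fin n) :=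
  if v = 0 then 0 else (Real.tanh (Real.sqrt c * ‖v‖) / (Real.sqrt c * ‖v‖)) • v

/-- Logarithmic map at the origin. -/
def logZero {n : ℕ} (c : ℝ) (y : EuclideanSpace ℝ (Fin n)) : EuclideanSpace ℝ (Fin n) :=
  if y = 0 then 0 else (_root_.artanh (Real.sqrt c * ‖y‖) / (Real.sqrt c * ‖y‖)) • y

/-- Möbius version of a linear map. -/
def mMap {n m : ℕ} (c : ℝ) (M : EuclideanSpace ℝ (Fin n) →ₗ[ℝ] EuclideanSpace ℝ (Fin m))
    (x : EuclideanSpace ℝ (Fin n)) : EuclideanSpace ℝ (Fin m) :=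
  if M x = 0 then 0 else
    ((1 / Real.sqrt c) * Real.tanh ((‖M x‖ / ‖x‖) * _root_.artanh (Real.sqrt c * ‖x‖)) *
      ‖M x‖⁻¹) • M x


lemma tanh_hasDerivAt_zero : HasDerivAt Real.tanh 1 (0:ℝ) := by
  have h : HasDerivAt (fun x : ℝ => Real.sinh x / Real.cosh x)
      ((Real.cosh 0 * Real.cosh 0 - Real.sinh 0 * Real.sinh 0) / Real.cosh 0 ^ 2) 0 :=
    (Real.hasDerivAt_sinh 0).div (Real.hasDerivAt_cosh 0) (Real.cosh_pos 0).ne'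
  have := h.congr_of_eventuallyEq (Filter.Eventually.of_forall fun x =>
    (Real.tanh_eq_sinh_div_cosh x))
  simpa [Real.sinh_zero, Real.cosh_zero] using this

lemma artanh_zero : _root_.artanh 0 = 0 := by simp [_root_.artanh]

lemma artanh_hasDerivAt_zero : HasDerivAt _root_.artanh 1 (0:ℝ) := by
  have hnum : HasDerivAt (fun x : ℝ => 1 + x) 1 0 := (hasDerivAt_id 0).const_add 1
  have hden : HasDerivAt (fun x : ℝ => 1 - x) (-1) 0 := by
    exact (hasDerivAt_id' (0:ℝ)).const_sub 1
  have hq : HasDerivAt (fun x : ℝ => (1 + x) / (1 - x))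
      ((1 * (1 - 0) - (1 + 0) * (-1)) / (1 - 0) ^ 2) 0 := hnum.div hden (by norm_num)
  have hlog : HasDerivAt (fun x : ℝ => Real.log ((1 + x) / (1 - x)))
      (((1 * (1 - 0) - (1 + 0) * (-1)) / (1 - 0) ^ 2) / ((1 + 0) / (1 - 0))) 0 :=
    hq.log (by norm_num)
  have := hlog.const_mul (1/2 : ℝ)
  have h2 : HasDerivAt _root_.artanh ((1/2 : ℝ) *
      (((1 * (1 - 0) - (1 + 0) * (-1)) / (1 - 0) ^ 2) / ((1 + 0) / (1 - 0)))) 0 := this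
  convert h2 using 1
  norm_num

theorem mSmul_tendsto_smul {n : ℕ} (r : ℝ) (x : EuclideanSpace ℝ (Fin n)) (hx0 : x ≠ 0) :
    Filter.Tendsto (fun c : ℝ => mSmul c r x) (nhdsWithin 0 (Set.Ioi 0)) (nhds (r • x)) := by
  set a := ‖x‖ with ha_def
  have ha : 0 < a := norm_pos_iff.mpr hx0
  set g : ℝ → ℝ := fun t => Real.tanh (r * _root_.artanh (a * t)) with hg_def
  have hg0 : g 0 = 0 := by simp [hg_def, _root_.artanh_zero]
  have hgd : HasDerivAt g (r * a) 0 := by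
    have h1 : HasDerivAt (fun t : ℝ => a * t) a 0 := by
      simpa using (hasDerivAt_id (0:ℝ)).const_mul a
    have h2 : HasDerivAt (fun t : ℝ => _root_.artanh (a * t)) (1 * a) 0 :=
      (show HasDerivAt _root_.artanh 1 ((fun t : ℝ => a * t) 0) by
        simpa using _root_.artanh_hasDerivAt_zero).comp 0 h1
    have h3 : HasDerivAt (fun t : ℝ => r * _root_.artanh (a * t)) (r * (1 * a)) 0 :=
      h2.const_mul r
    have h4 := (show HasDerivAt Real.tanh 1 ((fun t : ℝ => r * _root_.artanh (a * t)) 0) by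
        simpa [_root_.artanh_zero] using tanh_hasDerivAt_zero).comp 0 h3
    simpa [hg_def, Function.comp_def] using h4
  have hslope : Filter.Tendsto (fun t : ℝ => g t / t) (nhdsWithin 0 {(0:ℝ)}ᶜ)
      (nhds (r * a)) := by
    have := hasDerivAt_iff_tendsto_slope.mp hgd
    refine this.congr' ?_
    filter_upwards [self_mem_nhdsWithin] with t ht
    simp [slope_def_field, hg0]
  have hsqrt : Filter.Tendsto (fun c : ℝ => Real.sqrt c) (nhdsWithin 0 (Set.Ioi 0))
      (nhdsWithin 0 {(0:ℝ)}ᶜ) := by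
    apply tendsto_nhdsWithin_of_tendsto_nhds_of_eventually_within
    · have h0 : Filter.Tendsto Real.sqrt (nhds 0) (nhds 0) := by
        simpa using Real.continuous_sqrt.tendsto 0
      exact h0.mono_left nhdsWithin_le_nhds
    · filter_upwards [self_mem_nhdsWithin] with c hc
      exact (Real.sqrt_pos.mpr hc).ne'
  have hcomp : Filter.Tendsto (fun c : ℝ => g (Real.sqrt c) / Real.sqrt c)
      (nhdsWithin 0 (Set.Ioi 0)) (nhds (r * a)) := hslope.comp hsqrt
  have hs : Filter.Tendsto
      (fun c : ℝ => (1 / Real.sqrt c) * Real.tanh (r * _root_.artanh (Real.sqrt c * a)) * a⁻¹)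
      (nhdsWithin 0 (Set.Ioi 0)) (nhds r) := by
    have := hcomp.mul_const a⁻¹
    rw [mul_inv_cancel_right₀ ha.ne'] at this
    refine this.congr' ?_
    filter_upwards with c
    simp [hg_def, mul_comm, div_eq_mul_inv]
  have := hs.smul_const x
  refine this.congr' ?_
  filter_upwards with c
  simp [mSmul, hx0, ha_def]
end
end

section
/- For fixed distinct x, y ∈ ℝ^n, the distance d_c(x,y) = (2/√c) tanh⁻¹(√c ‖(−x) ⊕_c y‖) converges to 2‖x − y‖ as c → 0⁺. -/
noncomputable section
open Real
open scoped RealInnerProductSpace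
attribute [local instance] Classical.propDecidable

lemma artanh_hasDerivAt : HasDerivAt _root_.artanh 1 0 := by
  have h1 : HasDerivAt (fun t : ℝ => 1 + t) 1 0 := by
    simpa using (hasDerivAt_id (0:ℝ)).const_add 1
  have h2 : HasDerivAt (fun t : ℝ => 1 - t) (-1) 0 := by
    simpa using (hasDerivAt_id (0:ℝ)).const_sub 1
  have hdiv : HasDerivAt (fun t : ℝ => (1 + t) / (1 - t))
      ((1 * (1 - 0) - (1 + 0) * (-1)) / (1 - 0) ^ 2) 0 := h1.div h2 (by norm_num)
  have hlog := hdiv.log (by norm_num)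
  have := hlog.const_mul (1 / 2 : ℝ)
  show HasDerivAt (fun y : ℝ => 1 / 2 * Real.log ((1 + y) / (1 - y))) 1 0
  exact this.congr_deriv (by norm_num)

lemma artanh_div_tendsto :
    Filter.Tendsto (fun u : ℝ => _root_.artanh u / u) (nhdsWithin 0 {(0:ℝ)}ᶜ) (nhds 1) := by
  have h := hasDerivAt_iff_tendsto_slope.mp artanh_hasDerivAt
  have h0 : _root_.artanh 0 = 0 := by simp [_root_.artanh]
  refine h.congr (fun u => ?_)
  simp [slope, h0, div_eq_inv_mul]

theorem mDist_tendsto {n : ℕ} (x y : EuclideanSpace ℝ (Fin n)) (hxy : x ≠ y) :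
    Filter.Tendsto (fun c : ℝ => mDist c x y) (nhdsWithin 0 (Set.Ioi 0))
      (nhds (2 * ‖x - y‖)) := by
  set f : ℝ → EuclideanSpace ℝ (Fin n) := fun c => mAdd c (-x) y with hf
  have hcont : ContinuousAt f 0 := by
    have hD : ContinuousAt (fun c : ℝ =>
        1 + 2 * c * ⟪-x, y⟫ + c ^ 2 * ‖-x‖ ^ 2 * ‖y‖ ^ 2) 0 := by fun_prop
    have hD0 : (1 + 2 * (0:ℝ) * ⟪-x, y⟫ + 0 ^ 2 * ‖-x‖ ^ 2 * ‖y‖ ^ 2) ≠ 0 := by norm_num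
    have hA : ContinuousAt (fun c : ℝ =>
        (1 + 2 * c * ⟪-x, y⟫ + c * ‖y‖ ^ 2) • (-x) + (1 - c * ‖-x‖ ^ 2) • y) 0 := by
      fun_prop
    exact ((continuousAt_const.div hD hD0).smul hA)
  have hf0 : f 0 = y - x := by
    simp [hf, mAdd]
    abel
  have hL : (0:ℝ) < ‖y - x‖ := norm_pos_iff.mpr (sub_ne_zero.mpr (Ne.symm hxy))
  -- norm of f tends to ‖y - x‖ within Ioi 0
  have hnorm : Filter.Tendsto (fun c : ℝ => ‖f c‖) (nhdsWithin 0 (Set.Ioi 0))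
      (nhds ‖y - x‖) := by
    have := (hcont.norm.tendsto).mono_left (nhdsWithin_le_nhds (s := Set.Ioi (0:ℝ)))
    simpa [hf0] using this
  -- sqrt c tends to 0 within Ioi 0
  have hsqrt : Filter.Tendsto (fun c : ℝ => Real.sqrt c) (nhdsWithin 0 (Set.Ioi 0))
      (nhds 0) := by
    have := (Real.continuous_sqrt.continuousAt (x := (0:ℝ))).tendsto.mono_left
      (nhdsWithin_le_nhds (s := Set.Ioi (0:ℝ)))
    simpa using this
  set g : ℝ → ℝ := fun c => Real.sqrt c * ‖f c‖ with hg
  have hg0 : Filter.Tendsto g (nhdsWithin 0 (Set.Ioi 0)) (nhds 0) := by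
    simpa using hsqrt.mul hnorm
  -- eventually f c has positive norm and c > 0
  have hev : ∀ᶠ c in nhdsWithin 0 (Set.Ioi 0), 0 < ‖f c‖ ∧ 0 < c := by
    filter_upwards [hnorm.eventually (eventually_gt_nhds hL),
      self_mem_nhdsWithin] with c h1 h2
    exact ⟨h1, h2⟩
  -- g tends to 0 within the punctured filter
  have hgne : Filter.Tendsto g (nhdsWithin 0 (Set.Ioi 0)) (nhdsWithin 0 {(0:ℝ)}ᶜ) := by
    refine tendsto_nhdsWithin_of_tendsto_nhds_of_eventually_within _ hg0 ?_
    filter_upwards [hev] with c hc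
    have : 0 < g c := mul_pos (Real.sqrt_pos.mpr hc.2) hc.1
    exact ne_of_gt this
  have hratio : Filter.Tendsto (fun c => _root_.artanh (g c) / g c)
      (nhdsWithin 0 (Set.Ioi 0)) (nhds 1) := artanh_div_tendsto.comp hgne
  have hmain : Filter.Tendsto (fun c => 2 * ‖f c‖ * (_root_.artanh (g c) / g c))
      (nhdsWithin 0 (Set.Ioi 0)) (nhds (2 * ‖y - x‖ * 1)) :=
    ((tendsto_const_nhds.mul hnorm).mul hratio)
  have heq : ∀ᶠ c in nhdsWithin 0 (Set.Ioi 0),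
      2 * ‖f c‖ * (_root_.artanh (g c) / g c) = mDist c x y := by
    filter_upwards [hev] with c hc
    have hs : Real.sqrt c ≠ 0 := ne_of_gt (Real.sqrt_pos.mpr hc.2)
    have hn : ‖f c‖ ≠ 0 := ne_of_gt hc.1
    rw [mDist]
    field_simp [hg]
    ring
  have := (Filter.Tendsto.congr' heq hmain)
  rw [mul_one, norm_sub_rev] at this
  exact this
end
end

section
/- The size of the Riemannian gyroline element satisfies ‖(x + dx) ⊖_c x‖ = ‖dx‖/(1 − c‖x‖²) in the first-order limit: precisely, for x ∈ D_c^n and v ∈ ℝ^n, lim_{t→0} ‖(x + tv) ⊖_c x‖/t = ‖v‖/(1 − c‖x‖²). -/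
noncomputable section
open Real
open scoped RealInnerProductSpace
attribute [local instance] Classical.propDecidable

namespace GyroAux

variable {n : ℕ}

/-- Numerator factor. -/
noncomputable def Mv (c : ℝ) (x v : EuclideanSpace ℝ (Fin n)) (t : ℝ) :
    EuclideanSpace ℝ (Fin n) :=
  (c * t * ‖v‖ ^ 2) • x + ((1 - c * ‖x‖ ^ 2) - 2 * c * t * ⟪x, v⟫) • v

/-- Denominator. -/
noncomputable def Dv (c : ℝ) (x v : EuclideanSpace ℝ (Fin n)) (t : ℝ) : ℝ :=
  1 + 2 * c * ⟪x + t • v, -x⟫ + c ^ 2 * ‖x + t • v‖ ^ 2 * ‖-x‖ ^ 2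

lemma mAdd_eq (c : ℝ) (x v : EuclideanSpace ℝ (Fin n)) (t : ℝ) :
    mAdd c (x + t • v) (-x) = (1 / Dv c x v t) • (t • Mv c x v t) := by
  unfold mAdd Dv Mv
  congr 1
  have h1 : ‖x + t • v‖ ^ 2 = ⟪x, x⟫ + 2 * t * ⟪x, v⟫ + t ^ 2 * ⟪v, v⟫ := by
    rw [← real_inner_self_eq_norm_sq, real_inner_add_add_self, real_inner_smul_right,
      real_inner_smul_left, real_inner_smul_right]
    ring
  have h2 : ‖(-x : EuclideanSpace ℝ (Fin n))‖ ^ 2 = ⟪x, x⟫ := by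
    rw [norm_neg, ← real_inner_self_eq_norm_sq]
  have h3 : ⟪x + t • v, (-x : EuclideanSpace ℝ (Fin n))⟫ = -⟪x, x⟫ - t * ⟪x, v⟫ := by
    rw [inner_add_left, inner_neg_right, inner_neg_right, real_inner_smul_left,
      real_inner_comm v x]
    ring
  have h4 : ‖x‖ ^ 2 = ⟪x, x⟫ := (real_inner_self_eq_norm_sq x).symm
  have h5 : ‖v‖ ^ 2 = ⟪v, v⟫ := (real_inner_self_eq_norm_sq v).symm
  rw [h1, h2, h3, h4, h5]
  match_scalars <;> ring

lemma Dv_zero (c : ℝ) (x v : EuclideanSpace ℝ (Fin n)) :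
    Dv c x v 0 = (1 - c * ‖x‖ ^ 2) ^ 2 := by
  unfold Dv
  have h4 : ⟪x, (-x : EuclideanSpace ℝ (Fin n))⟫ = -(‖x‖ ^ 2) := by
    rw [inner_neg_right, real_inner_self_eq_norm_sq]
  simp only [zero_smul, add_zero, h4, norm_neg]
  ring

lemma Mv_zero (c : ℝ) (x v : EuclideanSpace ℝ (Fin n)) :
    Mv c x v 0 = (1 - c * ‖x‖ ^ 2) • v := by
  unfold Mv; simp

end GyroAux

theorem gyroline_element {n : ℕ} (c : ℝ) (hc : 0 < c)
    (x : EuclideanSpace ℝ (Fin n)) (hx : c * ‖x‖ ^ 2 < 1) (v : EuclideanSpace ℝ (Fin n)) :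
    Filter.Tendsto (fun t : ℝ => ‖mAdd c (x + t • v) (-x)‖ / t)
      (nhdsWithin 0 (Set.Ioi 0)) (nhds (‖v‖ / (1 - c * ‖x‖ ^ 2))) := by
  classical
  open GyroAux in
  have hpos : (0 : ℝ) < 1 - c * ‖x‖ ^ 2 := by linarith
  have hD0 : Dv c x v 0 = (1 - c * ‖x‖ ^ 2) ^ 2 := Dv_zero c x v
  have hD0ne : |Dv c x v 0| ≠ 0 := by
    rw [hD0]; positivity
  -- continuity of t ↦ ‖Mv t‖ / |Dv t|
  have hMcont : Continuous fun t : ℝ => Mv c x v t := by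
    unfold Mv; fun_prop
  have hDcont : Continuous fun t : ℝ => Dv c x v t := by
    unfold Dv
    have h1 : Continuous fun t : ℝ => x + t • v := by fun_prop
    exact (continuous_const.add (continuous_const.mul
      (h1.inner continuous_const))).add
      ((continuous_const.mul ((h1.norm.pow 2))).mul continuous_const)
  have hg : Filter.Tendsto (fun t : ℝ => ‖Mv c x v t‖ / |Dv c x v t|)
      (nhdsWithin 0 (Set.Ioi 0)) (nhds (‖Mv c x v 0‖ / |Dv c x v 0|)) := by
    apply Filter.Tendsto.mono_left _ nhdsWithin_le_nhds
    exact ((hMcont.norm.tendsto 0).div ((hDcont.abs.tendsto 0)) hD0ne)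
  have hval : ‖Mv c x v 0‖ / |Dv c x v 0| = ‖v‖ / (1 - c * ‖x‖ ^ 2) := by
    rw [Mv_zero, hD0, norm_smul, Real.norm_eq_abs, abs_of_pos hpos,
      abs_of_pos (by positivity : (0:ℝ) < (1 - c * ‖x‖ ^ 2) ^ 2)]
    field_simp
  rw [← hval]
  apply hg.congr'
  filter_upwards [self_mem_nhdsWithin] with t ht
  have ht' : (0 : ℝ) < t := ht
  rw [mAdd_eq c x v t, norm_smul, norm_smul]
  simp only [Real.norm_eq_abs, abs_of_pos ht', one_div, abs_inv]
  field_simp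
end
end

section
/- For c > 0, x ∈ D_c^n, and nonzero v ∈ ℝ^n, the exponential map exp_x^c(v) = x ⊕_c (tanh(√c λ_x^c ‖v‖ / 2) · v/(√c‖v‖)) and the logarithmic map log_x^c(y) = (2/(√c λ_x^c)) tanh⁻¹(√c‖(−x) ⊕_c y‖) · ((−x) ⊕_c y)/‖(−x) ⊕_c y‖ are mutually inverse: log_x^c(exp_x^c(v)) = v for all nonzero v ∈ ℝ^n. -/
noncomputable section
open Real
open scoped RealInnerProductSpace
attribute [local instance] Classical.propDecidable

lemma my_tanh_lt_one (s : ℝ) : Real.tanh s < 1 := by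
  rw [Real.tanh_eq_sinh_div_cosh]
  rw [div_lt_one (Real.cosh_pos s)]
  nlinarith [Real.cosh_sub_sinh s, Real.exp_pos (-s)]

lemma my_tanh_pos {s : ℝ} (hs : 0 < s) : 0 < Real.tanh s := by
  rw [Real.tanh_eq_sinh_div_cosh]
  exact div_pos (Real.sinh_pos_iff.2 hs) (Real.cosh_pos s)

lemma artanh_tanh (s : ℝ) : _root_.artanh (Real.tanh s) = s := by
  have hcp : (0:ℝ) < Real.cosh s := Real.cosh_pos s
  have h1 : 1 + Real.tanh s = Real.exp s / Real.cosh s := by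
    rw [Real.tanh_eq_sinh_div_cosh, ← Real.cosh_add_sinh]; field_simp
  have h2 : 1 - Real.tanh s = Real.exp (-s) / Real.cosh s := by
    rw [Real.tanh_eq_sinh_div_cosh, ← Real.cosh_sub_sinh]; field_simp
  have he : Real.exp s / Real.cosh s / (Real.exp (-s) / Real.cosh s)
      = Real.exp (2 * s) := by
    rw [div_div_div_comm, div_self hcp.ne', div_one, ← Real.exp_sub]
    congr 1
    ring
  rw [_root_.artanh, h1, h2, he, Real.log_exp]
  ring

lemma mAdd_neg_cancel {n : ℕ} (c : ℝ) (hc : 0 < c) (x w : EuclideanSpace ℝ (Fin n))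
    (hx : c * ‖x‖ ^ 2 < 1) (hw : c * ‖w‖ ^ 2 < 1) :
    mAdd c (-x) (mAdd c x w) = w := by
  have hxw : |⟪x, w⟫| ≤ ‖x‖ * ‖w‖ := abs_real_inner_le_norm x w
  have hnx : (0:ℝ) ≤ ‖x‖ := norm_nonneg x
  have hnw : (0:ℝ) ≤ ‖w‖ := norm_nonneg w
  have hs : (0:ℝ) < 1 - c * ‖x‖ ^ 2 := by linarith
  have hD : (0:ℝ) < 1 + 2 * c * ⟪x, w⟫ + c ^ 2 * ‖x‖ ^ 2 * ‖w‖ ^ 2 := by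
    nlinarith [sq_nonneg (1 - c * ‖x‖ * ‖w‖), abs_le.1 hxw, sq_nonneg (‖x‖ - ‖w‖),
      sq_nonneg (‖x‖ + ‖w‖)]
  set A := ⟪x, w⟫ with hA
  set X := ‖x‖ ^ 2 with hX
  set W := ‖w‖ ^ 2 with hW
  set D := 1 + 2 * c * A + c ^ 2 * X * W with hDdef
  set r := 1 + 2 * c * A + c * W with hr
  set s := 1 - c * X with hsdef
  set z := mAdd c x w with hzdef
  have hz : z = (1 / D) • (r • x + s • w) := rfl
  have hxx : ⟪x, x⟫ = X := real_inner_self_eq_norm_sq x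
  have hww : ⟪w, w⟫ = W := real_inner_self_eq_norm_sq w
  have hI : ⟪x, z⟫ = (r * X + s * A) / D := by
    rw [hz]
    simp only [inner_add_right, real_inner_smul_right, hxx, hA.symm]
    field_simp
  have hZ : ‖z‖ ^ 2 = (r ^ 2 * X + 2 * r * s * A + s ^ 2 * W) / D ^ 2 := by
    have h1 : ‖r • x + s • w‖ ^ 2 = r ^ 2 * X + 2 * r * s * A + s ^ 2 * W := by
      rw [norm_add_sq_real, norm_smul, norm_smul, real_inner_smul_left, real_inner_smul_right]
      rw [mul_pow, mul_pow, Real.norm_eq_abs, Real.norm_eq_abs, sq_abs, sq_abs, ← hX, ← hW, ← hA]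
      ring
    rw [hz, norm_smul, mul_pow, h1, Real.norm_eq_abs, sq_abs]
    field_simp
  have hE : 1 + 2 * c * -⟪x, z⟫ + c ^ 2 * ‖x‖ ^ 2 * ‖z‖ ^ 2 = s ^ 2 / D := by
    rw [hI, hZ, ← hX]
    field_simp
    ring
  have hp : 1 + 2 * c * -⟪x, z⟫ + c * ‖z‖ ^ 2 = s * r / D := by
    rw [hI, hZ]
    field_simp
    ring
  have goal1 : mAdd c (-x) z =
      (1 / (s ^ 2 / D)) • ((s * r / D) • (-x) + s • z) := by
    rw [mAdd, inner_neg_left, norm_neg, hE, hp, ← hX, ← hsdef]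
  rw [goal1, hz]
  match_scalars
  · field_simp
    ring
  · field_simp

theorem logMap_expMap {n : ℕ} (c : ℝ) (hc : 0 < c)
    (x : EuclideanSpace ℝ (Fin n)) (hx : c * ‖x‖ ^ 2 < 1)
    (v : EuclideanSpace ℝ (Fin n)) (hv : v ≠ 0) :
    logMap c x (expMap c x v) = v := by
  have hnv : (0:ℝ) < ‖v‖ := norm_pos_iff.2 hv
  have hsc : (0:ℝ) < Real.sqrt c := Real.sqrt_pos.2 hc
  have hs1 : (0:ℝ) < 1 - c * ‖x‖ ^ 2 := by linarith
  have hlam : 0 < lam c x := by rw [lam]; positivity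
  set s0 := Real.sqrt c * lam c x * ‖v‖ / 2 with hs0def
  have hs0 : 0 < s0 := by rw [hs0def]; positivity
  set T := Real.tanh s0 with hTdef
  have hT0 : 0 < T := my_tanh_pos hs0
  have hT1 : T < 1 := my_tanh_lt_one s0
  set w : EuclideanSpace ℝ (Fin n) := (T / (Real.sqrt c * ‖v‖)) • v with hwdef
  have hcoef : 0 < T / (Real.sqrt c * ‖v‖) := div_pos hT0 (mul_pos hsc hnv)
  have hwnorm : ‖w‖ = T / Real.sqrt c := by
    rw [hwdef, norm_smul, Real.norm_eq_abs, abs_of_pos hcoef]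
    field_simp
  have hw1 : c * ‖w‖ ^ 2 < 1 := by
    rw [hwnorm, div_pow, Real.sq_sqrt hc.le]
    have : c * (T ^ 2 / c) = T ^ 2 := by field_simp
    rw [this]
    nlinarith
  have hw0 : w ≠ 0 := by
    rw [hwdef]; exact smul_ne_zero hcoef.ne' hv
  have hexp : expMap c x v = mAdd c x w := by rw [expMap, if_neg hv]
  have hcan : mAdd c (-x) (mAdd c x w) = w := mAdd_neg_cancel c hc x w hx hw1
  rw [hexp, logMap, hcan, if_neg hw0]
  have hart : _root_.artanh (Real.sqrt c * ‖w‖) = s0 := by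
    rw [hwnorm, mul_div_cancel₀ _ hsc.ne', hTdef, _root_.artanh_tanh]
  rw [hart]
  have hsc2 : 2 / (Real.sqrt c * lam c x) * s0 * ‖w‖⁻¹ = Real.sqrt c * ‖v‖ / T := by
    rw [hwnorm, hs0def]
    field_simp
  rw [hsc2, hwdef, smul_smul]
  have hone : Real.sqrt c * ‖v‖ / T * (T / (Real.sqrt c * ‖v‖)) = 1 := by
    field_simp
  rw [hone, one_smul]
end
end

section
/- For c > 0, p ∈ D_c^n and a ∈ ℝ^n \ {0}, the Poincaré hyperplane satisfies: exp_p^c({z ∈ ℝ^n : ⟨z, a⟩ = 0}) = {x ∈ D_c^n : ⟨(−p) ⊕_c x, a⟩ = 0}. -/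
noncomputable section
open Real
open scoped RealInnerProductSpace
attribute [local instance] Classical.propDecidable

lemma tanh_eq_exp (x : ℝ) : Real.tanh x = (Real.exp (2*x) - 1) / (Real.exp (2*x) + 1) := by
  have h1 : Real.exp x ≠ 0 := Real.exp_ne_zero x
  have h2 : (0:ℝ) < Real.exp (2*x) + 1 := by positivity
  rw [Real.tanh_eq_sinh_div_cosh, Real.sinh_eq, Real.cosh_eq, Real.exp_neg,
    show (2:ℝ)*x = x + x by ring, Real.exp_add]
  have h3 : Real.exp x + (Real.exp x)⁻¹ ≠ 0 := by positivity
  field_simp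

lemma tanh_sq_lt_one (x : ℝ) : Real.tanh x ^ 2 < 1 := by
  rw [tanh_eq_exp]
  have h2 : (0:ℝ) < Real.exp (2*x) := Real.exp_pos _
  rw [div_pow]
  rw [div_lt_one (by positivity)]
  nlinarith

lemma tanh_artanh {y : ℝ} (h0 : 0 ≤ y) (h1 : y < 1) : Real.tanh (_root_.artanh y) = y := by
  have hy1 : (0:ℝ) < 1 - y := by linarith
  have hy2 : (0:ℝ) < (1 + y) / (1 - y) := by positivity
  rw [tanh_eq_exp, _root_.artanh, show 2 * ((1:ℝ)/2 * Real.log ((1+y)/(1-y))) = Real.log ((1+y)/(1-y)) by ring,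
    Real.exp_log hy2]
  have hne : (1 + y) / (1 - y) + 1 ≠ 0 := by positivity
  field_simp
  ring

lemma artanh_pos {y : ℝ} (h0 : 0 < y) (h1 : y < 1) : 0 < _root_.artanh y := by
  have hy1 : (0:ℝ) < 1 - y := by linarith
  have : (1:ℝ) < (1 + y) / (1 - y) := by rw [lt_div_iff₀ hy1]; linarith
  have := Real.log_pos this
  rw [_root_.artanh]; linarith

lemma mAdd_eq {n : ℕ} (c : ℝ) (x y : EuclideanSpace ℝ (Fin n)) :
    mAdd c x y = ((1 + 2 * c * ⟪x, y⟫ + c * ‖y‖ ^ 2) /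
        (1 + 2 * c * ⟪x, y⟫ + c ^ 2 * ‖x‖ ^ 2 * ‖y‖ ^ 2)) • x +
      ((1 - c * ‖x‖ ^ 2) / (1 + 2 * c * ⟪x, y⟫ + c ^ 2 * ‖x‖ ^ 2 * ‖y‖ ^ 2)) • y := by
  rw [mAdd]; module

lemma D_pos {n : ℕ} {c : ℝ} (hc : 0 < c) {x y : EuclideanSpace ℝ (Fin n)}
    (hx : c * ‖x‖ ^ 2 < 1) (hy : c * ‖y‖ ^ 2 < 1) :
    0 < 1 + 2 * c * ⟪x, y⟫ + c ^ 2 * ‖x‖ ^ 2 * ‖y‖ ^ 2 := by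
  have h := abs_real_inner_le_norm x y
  have h1 := neg_abs_le (⟪x, y⟫ : ℝ)
  have hxn := norm_nonneg x
  have hyn := norm_nonneg y
  have h2 : -(‖x‖ * ‖y‖) ≤ (⟪x, y⟫ : ℝ) := by linarith
  have hx0 : 0 ≤ c * ‖x‖ ^ 2 := by positivity
  have hy0 : 0 ≤ c * ‖y‖ ^ 2 := by positivity
  have hs1 : c * (‖x‖ * ‖y‖) < 1 := by nlinarith
  have hsq : 0 < (1 - c * (‖x‖ * ‖y‖)) ^ 2 := pow_pos (by linarith) 2
  nlinarith [mul_le_mul_of_nonneg_left h2 hc.le]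

lemma norm_sq_combo {n : ℕ} (A B : ℝ) (x y : EuclideanSpace ℝ (Fin n)) :
    ‖A • x + B • y‖ ^ 2 = A^2 * ‖x‖^2 + 2*A*B*⟪x, y⟫ + B^2 * ‖y‖^2 := by
  simp only [← real_inner_self_eq_norm_sq, inner_add_left, inner_add_right,
    real_inner_smul_left, real_inner_smul_right, real_inner_comm y x]
  ring

lemma one_sub_mAdd {n : ℕ} {c : ℝ} (hc : 0 < c) {x y : EuclideanSpace ℝ (Fin n)}
    (hx : c * ‖x‖ ^ 2 < 1) (hy : c * ‖y‖ ^ 2 < 1) :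
    1 - c * ‖mAdd c x y‖ ^ 2 =
      (1 - c * ‖x‖ ^ 2) * (1 - c * ‖y‖ ^ 2) /
        (1 + 2 * c * ⟪x, y⟫ + c ^ 2 * ‖x‖ ^ 2 * ‖y‖ ^ 2) := by
  have hD : (0:ℝ) < 1 + 2 * c * ⟪x, y⟫ + c ^ 2 * ‖x‖ ^ 2 * ‖y‖ ^ 2 := D_pos hc hx hy
  rw [mAdd_eq, norm_sq_combo]
  revert hD
  generalize (⟪x, y⟫ : ℝ) = al
  generalize ‖x‖ = X
  generalize ‖y‖ = Y
  intro hD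
  have hD' := hD.ne'
  generalize hDdef : 1 + 2 * c * al + c ^ 2 * X ^ 2 * Y ^ 2 = D at hD' ⊢
  field_simp
  subst hDdef
  ring

lemma mAdd_ball {n : ℕ} {c : ℝ} (hc : 0 < c) {x y : EuclideanSpace ℝ (Fin n)}
    (hx : c * ‖x‖ ^ 2 < 1) (hy : c * ‖y‖ ^ 2 < 1) :
    c * ‖mAdd c x y‖ ^ 2 < 1 := by
  have hD := D_pos hc hx hy
  have h := one_sub_mAdd hc hx hy
  have : 0 < (1 - c * ‖x‖ ^ 2) * (1 - c * ‖y‖ ^ 2) /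
      (1 + 2 * c * ⟪x, y⟫ + c ^ 2 * ‖x‖ ^ 2 * ‖y‖ ^ 2) :=
    div_pos (mul_pos (by linarith) (by linarith)) hD
  linarith

lemma left_cancel {n : ℕ} {c : ℝ} (hc : 0 < c) {x y : EuclideanSpace ℝ (Fin n)}
    (hx : c * ‖x‖ ^ 2 < 1) (hy : c * ‖y‖ ^ 2 < 1) :
    mAdd c (-x) (mAdd c x y) = y := by
  have hD0 : (0:ℝ) < 1 + 2 * c * ⟪x, y⟫ + c ^ 2 * ‖x‖ ^ 2 * ‖y‖ ^ 2 := D_pos hc hx hy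
  have hu : c * ‖mAdd c x y‖ ^ 2 < 1 := mAdd_ball hc hx hy
  have hxE := mAdd_eq c x y
  have hxu : (⟪x, mAdd c x y⟫ : ℝ) =
      (1 / (1 + 2 * c * ⟪x, y⟫ + c ^ 2 * ‖x‖ ^ 2 * ‖y‖ ^ 2)) *
        ((1 + 2 * c * ⟪x, y⟫ + c * ‖y‖ ^ 2) * ‖x‖ ^ 2 + (1 - c * ‖x‖ ^ 2) * ⟪x, y⟫) := by
    rw [hxE]
    simp only [inner_add_right, real_inner_smul_right, real_inner_self_eq_norm_sq]
    ring
  have hnu : ‖mAdd c x y‖ ^ 2 =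
      (1 / (1 + 2 * c * ⟪x, y⟫ + c ^ 2 * ‖x‖ ^ 2 * ‖y‖ ^ 2)) ^ 2 *
        ((1 + 2 * c * ⟪x, y⟫ + c * ‖y‖ ^ 2) ^ 2 * ‖x‖ ^ 2 +
          2 * (1 + 2 * c * ⟪x, y⟫ + c * ‖y‖ ^ 2) * (1 - c * ‖x‖ ^ 2) * ⟪x, y⟫ +
          (1 - c * ‖x‖ ^ 2) ^ 2 * ‖y‖ ^ 2) := by
    rw [hxE, norm_sq_combo]
    ring
  have hD'0 : (0:ℝ) <
      1 + 2 * c * ⟪-x, mAdd c x y⟫ + c ^ 2 * ‖-x‖ ^ 2 * ‖mAdd c x y‖ ^ 2 := by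
    apply D_pos hc _ hu
    rw [norm_neg]; exact hx
  have key : (1 + 2 * c * ⟪-x, mAdd c x y⟫ + c * ‖mAdd c x y‖ ^ 2) • (-x) +
      (1 - c * ‖(-x)‖ ^ 2) • (mAdd c x y) =
      (1 + 2 * c * ⟪-x, mAdd c x y⟫ + c ^ 2 * ‖-x‖ ^ 2 * ‖mAdd c x y‖ ^ 2) • y := by
    rw [inner_neg_left, hxu, norm_neg, hnu, hxE]
    match_scalars <;>
    · revert hD0
      generalize (⟪x, y⟫ : ℝ) = al
      generalize ‖x‖ = X
      generalize ‖y‖ = Y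
      intro hD0
      have hD0' := hD0.ne'
      generalize hDdef : 1 + 2 * c * al + c ^ 2 * X ^ 2 * Y ^ 2 = D at hD0' ⊢
      field_simp
      subst hDdef
      ring
  rw [mAdd, key, smul_smul, one_div, inv_mul_cancel₀ hD'0.ne', one_smul]

lemma mAdd_zero_right {n : ℕ} (c : ℝ) (x : EuclideanSpace ℝ (Fin n)) :
    mAdd c x 0 = x := by
  simp [mAdd]

lemma mAdd_neg_self {n : ℕ} (c : ℝ) (p : EuclideanSpace ℝ (Fin n)) :
    mAdd c (-p) p = 0 := by
  rw [mAdd_eq, inner_neg_left, real_inner_self_eq_norm_sq, norm_neg]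
  match_scalars
  ring

theorem poincare_hyperplane_eq {n : ℕ} (c : ℝ) (hc : 0 < c)
    (p : EuclideanSpace ℝ (Fin n)) (hp : c * ‖p‖ ^ 2 < 1)
    (a : EuclideanSpace ℝ (Fin n)) (ha : a ≠ 0) :
    expMap c p '' {z : EuclideanSpace ℝ (Fin n) | ⟪z, a⟫ = 0} =
      {x : EuclideanSpace ℝ (Fin n) | c * ‖x‖ ^ 2 < 1 ∧ ⟪mAdd c (-p) x, a⟫ = 0} := by
  have hsc : (0:ℝ) < Real.sqrt c := Real.sqrt_pos.mpr hc
  have hcs : Real.sqrt c ^ 2 = c := Real.sq_sqrt hc.le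
  ext x
  simp only [Set.mem_image, Set.mem_setOf_eq]
  constructor
  · rintro ⟨z, hz, rfl⟩
    by_cases h0 : z = 0
    · subst h0
      rw [expMap, if_pos rfl]
      exact ⟨hp, by rw [mAdd_neg_self, inner_zero_left]⟩
    · rw [expMap, if_neg h0]
      have hz0 : ‖z‖ ≠ 0 := norm_ne_zero_iff.mpr h0
      have hsq : c * ‖(Real.tanh (Real.sqrt c * lam c p * ‖z‖ / 2) /
          (Real.sqrt c * ‖z‖)) • z‖ ^ 2 < 1 := by
        have hkey : c * ‖(Real.tanh (Real.sqrt c * lam c p * ‖z‖ / 2) /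
            (Real.sqrt c * ‖z‖)) • z‖ ^ 2
            = Real.tanh (Real.sqrt c * lam c p * ‖z‖ / 2) ^ 2 := by
          rw [norm_smul, Real.norm_eq_abs, mul_pow, sq_abs, div_pow, mul_pow, hcs]
          field_simp
        rw [hkey]
        exact _root_.tanh_sq_lt_one _
      refine ⟨mAdd_ball hc hp hsq, ?_⟩
      rw [left_cancel hc hp hsq, real_inner_smul_left, hz, mul_zero]
  · rintro ⟨hx, hinner⟩
    have hpn : c * ‖(-p)‖ ^ 2 < 1 := by rw [norm_neg]; exact hp
    have hpw : mAdd c p (mAdd c (-p) x) = x := by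
      have h := left_cancel hc hpn hx
      rwa [neg_neg] at h
    by_cases h0 : mAdd c (-p) x = 0
    · refine ⟨0, inner_zero_left a, ?_⟩
      rw [expMap, if_pos rfl]
      rw [h0, mAdd_zero_right] at hpw
      exact hpw
    · set w := mAdd c (-p) x with hwdef
      have hw : c * ‖w‖ ^ 2 < 1 := mAdd_ball hc hpn hx
      have hlam : 0 < lam c p := by
        unfold lam
        exact div_pos two_pos (by linarith)
      have hwn : 0 < ‖w‖ := norm_pos_iff.mpr h0
      have hsq2 : (Real.sqrt c * ‖w‖) ^ 2 = c * ‖w‖ ^ 2 := by rw [mul_pow, hcs]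
      have hsw0 : 0 < Real.sqrt c * ‖w‖ := by positivity
      have hsw1 : Real.sqrt c * ‖w‖ < 1 := by nlinarith
      set t : ℝ := (2 / (Real.sqrt c * lam c p)) * _root_.artanh (Real.sqrt c * ‖w‖) * ‖w‖⁻¹
        with ht
      have ht0 : 0 < t := by
        apply mul_pos (mul_pos (div_pos two_pos (by positivity)) (artanh_pos hsw0 hsw1))
          (inv_pos.mpr hwn)
      have hz0 : t • w ≠ 0 := smul_ne_zero ht0.ne' h0
      refine ⟨t • w, ?_, ?_⟩
      · rw [real_inner_smul_left, hinner, mul_zero]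
      · rw [expMap, if_neg hz0]
        have hnz : ‖t • w‖ = t * ‖w‖ := by
          rw [norm_smul, Real.norm_eq_abs, abs_of_pos ht0]
        have harg : Real.sqrt c * lam c p * ‖t • w‖ / 2 = _root_.artanh (Real.sqrt c * ‖w‖) := by
          rw [hnz, ht]
          field_simp
        have hcoef : (Real.tanh (Real.sqrt c * lam c p * ‖t • w‖ / 2) /
            (Real.sqrt c * ‖t • w‖)) • (t • w) = w := by
          rw [harg, tanh_artanh hsw0.le hsw1, hnz, smul_smul]
          have hone : Real.sqrt c * ‖w‖ / (Real.sqrt c * (t * ‖w‖)) * t = 1 := by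
            field_simp
          rw [hone, one_smul]
        rw [hcoef, hwdef, hpw]
end
end
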